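/- Any subgroup Γ of SL(2, F) commensurable with the Hilbert modular group SL(2, O_F) has only finitely many orbits on P¹(F) (i.e., Γ has finitely many cusps). -/

import Mathlib

open NumberField nonZeroDivisors

/-- The action of `SL(2, F)` on the projective line `ℙ¹(F)`. -/
noncomputable instance P1.mulAction {F : Type*} [Field F] :
    MulAction (Matrix.SpecialLinearGroup (Fin 2) F) (Projectivization F (Fin 2 → F)) where
  smul g x := x.map (Matrix.SpecialLinearGroup.toLin' g).toLinearMap
    (Matrix.SpecialLinearGroup.toLin' g).injective
  one_smul x := by
    induction x using Projectivization.ind with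
    | h v hv =>
      show Projectivization.map _ _ _ = _
      rw [Projectivization.map_mk]
      simp [map_one]
  mul_smul g h x := by
    induction x using Projectivization.ind with
    | h v hv =>
      show Projectivization.map _ _ _ = Projectivization.map _ _ (Projectivization.map _ _ _)
      rw [Projectivization.map_mk, Projectivization.map_mk, Projectivization.map_mk]
      simp [map_mul]

/-- The Hilbert modular group `SL(2, O_F)`, viewed as a subgroup of `SL(2, F)`. -/
noncomputable def HilbertModularGroup (F : Type*) [Field F] [NumberField F] :
    Subgroup (Matrix.SpecialLinearGroup (Fin 2) F) :=
  (Matrix.SpecialLinearGroup.map (algebraMap (𝓞 F) F)).range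

/-! ### Auxiliary material -/

open FractionalIdeal

section OrbitCounting

variable {G X : Type*} [Group G] [MulAction G X]

/-- If a subgroup `K` of `H` has finite relative index and `H` has finitely many orbits,
then `K` has finitely many orbits. -/
lemma finite_orbits_of_le_of_relindex {K H : Subgroup G} (hle : K ≤ H)
    (hidx : K.relIndex H ≠ 0)
    (hH : Finite (Quotient (MulAction.orbitRel H X))) :
    Finite (Quotient (MulAction.orbitRel K X)) := by
  have _ : (K.subgroupOf H).FiniteIndex := ⟨hidx⟩
  have hfin : Finite (Quotient (QuotientGroup.rightRel (K.subgroupOf H))) :=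
    Finite.of_equiv _ (QuotientGroup.quotientRightRelEquivQuotientLeftRel _).symm
  set Φ : Quotient (MulAction.orbitRel H X) × Quotient (QuotientGroup.rightRel (K.subgroupOf H)) →
      Quotient (MulAction.orbitRel K X) :=
    fun p => Quotient.mk _ ((p.2.out : G) • p.1.out) with hΦ
  have hsurj : Function.Surjective Φ := by
    rintro ⟨x⟩
    set q : Quotient (MulAction.orbitRel H X) := Quotient.mk _ x with hq
    obtain ⟨h, hh⟩ := Quotient.mk_out (s := MulAction.orbitRel H X) x
    set c : Quotient (QuotientGroup.rightRel (K.subgroupOf H)) := Quotient.mk _ h⁻¹ with hc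
    have hk : h⁻¹ * c.out⁻¹ ∈ K.subgroupOf H := by
      have := Quotient.mk_out (s := QuotientGroup.rightRel (K.subgroupOf H)) h⁻¹
      exact (QuotientGroup.rightRel_apply).mp this
    have hk' : ((h⁻¹ * c.out⁻¹ : H) : G) ∈ K := hk
    refine ⟨⟨q, c⟩, ?_⟩
    show Quotient.mk _ ((c.out : G) • q.out) = Quotient.mk _ x
    apply Quotient.sound
    refine ⟨⟨((h⁻¹ * c.out⁻¹ : H) : G)⁻¹, inv_mem hk'⟩, ?_⟩
    have hcout : (c.out : G) = ((h⁻¹ * c.out⁻¹ : H) : G)⁻¹ * ((h : G))⁻¹ := by push_cast; group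
    have hhx : (h : G) • x = q.out := hh
    show ((h⁻¹ * c.out⁻¹ : H) : G)⁻¹ • x = (c.out : G) • q.out
    rw [hcout, ← hhx, mul_smul, inv_smul_smul]
  exact Finite.of_surjective Φ hsurj

end OrbitCounting

section Idl

variable {F : Type*} [Field F] [NumberField F]

/-- The fractional ideal generated by the coordinates of a vector in `F²`. -/
noncomputable def idl (v : Fin 2 → F) : FractionalIdeal (𝓞 F)⁰ F :=
  spanSingleton (𝓞 F)⁰ (v 0) + spanSingleton (𝓞 F)⁰ (v 1)

lemma mem_idl_left (v : Fin 2 → F) : v 0 ∈ idl v :=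
  Submodule.mem_sup_left (mem_spanSingleton_self _ _)

lemma mem_idl_right (v : Fin 2 → F) : v 1 ∈ idl v :=
  Submodule.mem_sup_right (mem_spanSingleton_self _ _)

lemma idl_ne_zero {v : Fin 2 → F} (hv : v ≠ 0) : idl v ≠ 0 := by
  intro h
  apply hv
  funext i
  have h0 : v 0 = 0 := by
    have := mem_idl_left v; rw [h] at this
    simpa using (mem_zero_iff _).mp this
  have h1 : v 1 = 0 := by
    have := mem_idl_right v; rw [h] at this
    simpa using (mem_zero_iff _).mp this
  fin_cases i <;> simpa

lemma idl_smul (c : F) (v : Fin 2 → F) :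
    idl (c • v) = spanSingleton (𝓞 F)⁰ c * idl v := by
  simp only [idl, mul_add, spanSingleton_mul_spanSingleton, Pi.smul_apply, smul_eq_mul]

lemma idl_le {v : Fin 2 → F} {J : FractionalIdeal (𝓞 F)⁰ F} (h0 : v 0 ∈ J) (h1 : v 1 ∈ J) :
    idl v ≤ J :=
  sup_le (spanSingleton_le_iff_mem.mpr h0) (spanSingleton_le_iff_mem.mpr h1)

lemma idl_mulVec_le (g : Matrix.SpecialLinearGroup (Fin 2) (𝓞 F)) (v : Fin 2 → F) :
    idl ((Matrix.SpecialLinearGroup.map (algebraMap (𝓞 F) F) g).val.mulVec v) ≤ idl v := by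
  apply idl_le <;>
  · rw [Matrix.mulVec, dotProduct, Fin.sum_univ_two]
    refine Submodule.add_mem _ ?_ ?_
    · show algebraMap (𝓞 F) F _ * v 0 ∈ _
      rw [← Algebra.smul_def]
      exact Submodule.smul_mem _ _ (mem_idl_left v)
    · show algebraMap (𝓞 F) F _ * v 1 ∈ _
      rw [← Algebra.smul_def]
      exact Submodule.smul_mem _ _ (mem_idl_right v)

lemma idl_mulVec_eq (g : Matrix.SpecialLinearGroup (Fin 2) (𝓞 F)) (v : Fin 2 → F) :
    idl ((Matrix.SpecialLinearGroup.map (algebraMap (𝓞 F) F) g).val.mulVec v) = idl v := by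
  refine le_antisymm (idl_mulVec_le g v) ?_
  have := idl_mulVec_le g⁻¹ ((Matrix.SpecialLinearGroup.map (algebraMap (𝓞 F) F) g).val.mulVec v)
  rwa [Matrix.mulVec_mulVec, ← Matrix.SpecialLinearGroup.coe_mul, ← _root_.map_mul,
    inv_mul_cancel, _root_.map_one, Matrix.SpecialLinearGroup.coe_one, Matrix.one_mulVec] at this

lemma mulVec_ne_zero (g : Matrix.SpecialLinearGroup (Fin 2) F) {v : Fin 2 → F} (hv : v ≠ 0) :
    g.val.mulVec v ≠ 0 := by
  intro h
  apply hv
  have := congrArg (fun w => (g⁻¹).val.mulVec w) h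
  simp only [Matrix.mulVec_mulVec, ← Matrix.SpecialLinearGroup.coe_mul, inv_mul_cancel,
    Matrix.SpecialLinearGroup.coe_one, Matrix.one_mulVec, Matrix.mulVec_zero] at this
  exact this

lemma smul_mk_eq (g : Matrix.SpecialLinearGroup (Fin 2) F) (v : Fin 2 → F) (hv : v ≠ 0) :
    g • Projectivization.mk F v hv
      = Projectivization.mk F (g.val.mulVec v) (mulVec_ne_zero g hv) := by
  show Projectivization.map _ _ _ = _
  rw [Projectivization.map_mk, Projectivization.mk_eq_mk_iff']
  exact ⟨1, by rw [one_smul]; exact (Matrix.SpecialLinearGroup.toLin'_apply g v).symm⟩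

lemma mk0_congr {G₀ : Type*} [GroupWithZero G₀] {a b : G₀} (h : a = b) (ha : a ≠ 0)
    (hb : b ≠ 0) : Units.mk0 a ha = Units.mk0 b hb := by subst h; rfl

lemma cls_span_mul {c : F} (hc : c ≠ 0) (I : FractionalIdeal (𝓞 F)⁰ F) (hI : I ≠ 0)
    (h' : spanSingleton (𝓞 F)⁰ c * I ≠ 0) :
    ClassGroup.mk F (Units.mk0 (spanSingleton (𝓞 F)⁰ c * I) h')
      = ClassGroup.mk F (Units.mk0 I hI) := by
  have hc' : spanSingleton (𝓞 F)⁰ c ≠ 0 := by simpa [spanSingleton_eq_zero_iff] using hc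
  have : Units.mk0 (spanSingleton (𝓞 F)⁰ c * I) h'
      = Units.mk0 (spanSingleton (𝓞 F)⁰ c) hc' * Units.mk0 I hI := Units.ext rfl
  rw [this, _root_.map_mul]
  convert one_mul _
  rw [ClassGroup.mk_eq_one_iff]
  exact ⟨⟨c, by simp [coe_spanSingleton]⟩⟩

lemma exists_span_of_cls_eq {I J : FractionalIdeal (𝓞 F)⁰ F} (hI : I ≠ 0) (hJ : J ≠ 0)
    (h : ClassGroup.mk F (Units.mk0 I hI) = ClassGroup.mk F (Units.mk0 J hJ)) :
    ∃ c : F, c ≠ 0 ∧ J = spanSingleton (𝓞 F)⁰ c * I := by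
  have h1 : ClassGroup.mk F (Units.mk0 I hI * (Units.mk0 J hJ)⁻¹) = 1 := by
    rw [_root_.map_mul, h, _root_.map_inv, mul_inv_cancel]
  rw [ClassGroup.mk_eq_one_iff] at h1
  obtain ⟨⟨x, hx⟩⟩ := h1
  have hval : ((Units.mk0 I hI * (Units.mk0 J hJ)⁻¹ : (FractionalIdeal (𝓞 F)⁰ F)ˣ) :
      FractionalIdeal (𝓞 F)⁰ F) = I * J⁻¹ := by
    rw [Units.val_mul, Units.val_inv_eq_inv_val]
    rfl
  have hIJ : I * J⁻¹ = spanSingleton (𝓞 F)⁰ x := by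
    apply coeToSubmodule_injective
    beta_reduce
    rw [coe_spanSingleton, ← hval]
    exact hx
  have hxne : x ≠ 0 := by
    intro h0
    rw [h0, spanSingleton_zero] at hIJ
    rcases mul_eq_zero.mp hIJ with h | h
    · exact hI h
    · exact inv_ne_zero hJ h
  refine ⟨x⁻¹, inv_ne_zero hxne, ?_⟩
  have h2 : I = spanSingleton (𝓞 F)⁰ x * J := by
    calc I = I * J⁻¹ * J := by rw [mul_assoc, inv_mul_cancel₀ hJ, mul_one]
    _ = spanSingleton (𝓞 F)⁰ x * J := by rw [hIJ]
  rw [h2, ← mul_assoc, spanSingleton_mul_spanSingleton, inv_mul_cancel₀ hxne,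
    spanSingleton_one, one_mul]

lemma one_decomp {v : Fin 2 → F} (hv : idl v ≠ 0) :
    ∃ d ∈ (idl v)⁻¹, ∃ e ∈ (idl v)⁻¹, v 0 * d + v 1 * e = 1 := by
  have h1 : (1 : F) ∈ idl v * (idl v)⁻¹ := by
    rw [mul_inv_cancel₀ hv]; exact one_mem_one _
  have hsplit : idl v * (idl v)⁻¹
      = spanSingleton (𝓞 F)⁰ (v 0) * (idl v)⁻¹ + spanSingleton (𝓞 F)⁰ (v 1) * (idl v)⁻¹ := by
    rw [← add_mul]; rfl
  rw [hsplit] at h1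
  obtain ⟨y, hy, z, hz, hyz⟩ := (mem_add _ _ _).mp h1
  obtain ⟨d, hd, rfl⟩ := mem_singleton_mul.mp hy
  obtain ⟨e, he, rfl⟩ := mem_singleton_mul.mp hz
  exact ⟨d, hd, e, he, hyz⟩

lemma exists_SL2O_mulVec_eq {v w : Fin 2 → F}
    (hvI : idl v ≠ 0) (h : idl v = idl w) :
    ∃ g : Matrix.SpecialLinearGroup (Fin 2) (𝓞 F),
      (Matrix.SpecialLinearGroup.map (algebraMap (𝓞 F) F) g).val.mulVec v = w := by
  obtain ⟨d, hd, e, he, hde⟩ := one_decomp hvI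
  obtain ⟨d', hd', e', he', hde'⟩ := one_decomp (h ▸ hvI)
  rw [← h] at hd' he'
  set I := idl v with hIdef
  set N : Matrix (Fin 2) (Fin 2) F :=
    !![w 0 * d + v 1 * e', w 0 * e - v 0 * e'; w 1 * d - v 1 * d', w 1 * e + v 0 * d'] with hN
  have hw0 : w 0 ∈ I := h ▸ mem_idl_left w
  have hw1 : w 1 ∈ I := h ▸ mem_idl_right w
  have hv0 : v 0 ∈ I := mem_idl_left v
  have hv1 : v 1 ∈ I := mem_idl_right v
  have hmem : ∀ i j, N i j ∈ (1 : FractionalIdeal (𝓞 F)⁰ F) := by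
    intro i j
    rw [← mul_inv_cancel₀ hvI]
    fin_cases i <;> fin_cases j
    · exact Submodule.add_mem _ (mul_mem_mul hw0 hd) (mul_mem_mul hv1 he')
    · exact Submodule.sub_mem _ (mul_mem_mul hw0 he) (mul_mem_mul hv0 he')
    · exact Submodule.sub_mem _ (mul_mem_mul hw1 hd) (mul_mem_mul hv1 hd')
    · exact Submodule.add_mem _ (mul_mem_mul hw1 he) (mul_mem_mul hv0 hd')
  choose r hr using fun i j => (mem_one_iff _).mp (hmem i j)
  set g0 : Matrix (Fin 2) (Fin 2) (𝓞 F) := Matrix.of (fun i j => r i j) with hg0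
  have hmap : (algebraMap (𝓞 F) F).mapMatrix g0 = N := by
    ext i j
    exact hr i j
  have hdetN : N.det = 1 := by
    rw [Matrix.det_fin_two_of]
    linear_combination (w 0 * d' + w 1 * e') * hde + hde'
  have hdet : g0.det = 1 := by
    apply IsFractionRing.injective (𝓞 F) F
    rw [RingHom.map_det, hmap, hdetN, _root_.map_one]
  refine ⟨⟨g0, hdet⟩, ?_⟩
  have hval : (Matrix.SpecialLinearGroup.map (algebraMap (𝓞 F) F) ⟨g0, hdet⟩).val = N := hmap
  rw [hval]
  funext i
  rw [Matrix.mulVec, dotProduct, Fin.sum_univ_two]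
  fin_cases i
  · show (w 0 * d + v 1 * e') * v 0 + (w 0 * e - v 0 * e') * v 1 = w 0
    linear_combination w 0 * hde
  · show (w 1 * d - v 1 * d') * v 0 + (w 1 * e + v 0 * d') * v 1 = w 1
    linear_combination w 1 * hde

/-- The class of the ideal generated by the coordinates of a representative. -/
noncomputable def clsOf (x : Projectivization F (Fin 2 → F)) : ClassGroup (𝓞 F) :=
  ClassGroup.mk F (Units.mk0 (idl x.rep) (idl_ne_zero x.rep_nonzero))

lemma clsOf_smul (g : HilbertModularGroup F) (x : Projectivization F (Fin 2 → F)) :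
    clsOf ((g : Matrix.SpecialLinearGroup (Fin 2) F) • x) = clsOf x := by
  obtain ⟨g', hg'⟩ := g.2
  set gF := (g : Matrix.SpecialLinearGroup (Fin 2) F) with hgF
  have hx : gF • x = Projectivization.mk F (gF.val.mulVec x.rep)
      (mulVec_ne_zero gF x.rep_nonzero) := by
    conv_lhs => rw [← x.mk_rep]
    exact smul_mk_eq gF x.rep x.rep_nonzero
  obtain ⟨a, ha⟩ := (Projectivization.mk_eq_mk_iff F _ _
      (Projectivization.rep_nonzero _) (mulVec_ne_zero gF x.rep_nonzero)).mp
    (by rw [← hx]; exact Projectivization.mk_rep _)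
  have hrep : (gF • x).rep = (a : F) • gF.val.mulVec x.rep := ha.symm
  have hidl : idl ((gF • x).rep) = spanSingleton (𝓞 F)⁰ (a : F) * idl x.rep := by
    rw [hrep, idl_smul]
    congr 1
    rw [← hg']
    exact idl_mulVec_eq g' x.rep
  unfold clsOf
  have hne : spanSingleton (𝓞 F)⁰ (a : F) * idl x.rep ≠ 0 := by
    rw [← hidl]; exact idl_ne_zero (Projectivization.rep_nonzero _)
  rw [mk0_congr hidl _ hne]
  exact cls_span_mul (Units.ne_zero a) _ (idl_ne_zero x.rep_nonzero) hne

lemma finite_orbits_HMG :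
    Finite (Quotient (MulAction.orbitRel (HilbertModularGroup F)
      (Projectivization F (Fin 2 → F)))) := by
  have : Finite (ClassGroup (𝓞 F)) := Finite.of_fintype _
  set f : Quotient (MulAction.orbitRel (HilbertModularGroup F)
      (Projectivization F (Fin 2 → F))) → ClassGroup (𝓞 F) :=
    Quotient.lift clsOf (by
      rintro x y ⟨g, rfl⟩
      exact clsOf_smul g y) with hf
  refine Finite.of_injective f ?_
  rintro ⟨x⟩ ⟨y⟩ hxy
  have hcls : clsOf x = clsOf y := hxy
  obtain ⟨c, hc, hspan⟩ := exists_span_of_cls_eq (idl_ne_zero x.rep_nonzero)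
    (idl_ne_zero y.rep_nonzero) hcls
  have hvnz : c • x.rep ≠ 0 := smul_ne_zero hc x.rep_nonzero
  have hidl : idl (c • x.rep) = idl y.rep := by rw [idl_smul, ← hspan]
  obtain ⟨g, hg⟩ := exists_SL2O_mulVec_eq (idl_ne_zero hvnz) hidl
  set gF := Matrix.SpecialLinearGroup.map (algebraMap (𝓞 F) F) g with hgF
  have hact : gF • x = y := by
    have hmkx : x = Projectivization.mk F (c • x.rep) hvnz := by
      conv_lhs => rw [← x.mk_rep]
      rw [Projectivization.mk_eq_mk_iff']
      exact ⟨c⁻¹, by rw [smul_smul, inv_mul_cancel₀ hc, one_smul]⟩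
    rw [hmkx, smul_mk_eq]
    conv_rhs => rw [← y.mk_rep]
    rw [Projectivization.mk_eq_mk_iff']
    exact ⟨1, by rw [one_smul]; exact hg.symm⟩
  show Quotient.mk (MulAction.orbitRel (HilbertModularGroup F)
      (Projectivization F (Fin 2 → F))) x = Quotient.mk _ y
  apply Quotient.sound
  refine ⟨(⟨gF, ⟨g, rfl⟩⟩ : HilbertModularGroup F)⁻¹, ?_⟩
  show (gF⁻¹ : Matrix.SpecialLinearGroup (Fin 2) F) • y = x
  rw [← hact, inv_smul_smul]

end Idl

/-- Any subgroup of `SL(2, F)` commensurable with the Hilbert modular group `SL(2, O_F)`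
has finitely many orbits on `ℙ¹(F)`, i.e. finitely many cusps. -/
theorem finitely_many_cusps (F : Type*) [Field F] [NumberField F]
    (Γ : Subgroup (Matrix.SpecialLinearGroup (Fin 2) F))
    (hΓ : Subgroup.Commensurable Γ (HilbertModularGroup F)) :
    Finite (Quotient (MulAction.orbitRel Γ (Projectivization F (Fin 2 → F)))) := by
  set K := Γ ⊓ HilbertModularGroup F with hK
  have hidx : K.relIndex (HilbertModularGroup F) ≠ 0 := by
    rw [hK, Subgroup.inf_relIndex_right]
    exact hΓ.1
  have hKfin : Finite (Quotient (MulAction.orbitRel K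
      (Projectivization F (Fin 2 → F)))) :=
    finite_orbits_of_le_of_relindex inf_le_right hidx finite_orbits_HMG
  set ψ : Quotient (MulAction.orbitRel K (Projectivization F (Fin 2 → F))) →
      Quotient (MulAction.orbitRel Γ (Projectivization F (Fin 2 → F))) :=
    Quotient.map id (by
      rintro a b ⟨g, rfl⟩
      have hgΓ : (g : Matrix.SpecialLinearGroup (Fin 2) F) ∈ Γ :=
        (Subgroup.mem_inf.mp g.2).1
      exact ⟨⟨(g : Matrix.SpecialLinearGroup (Fin 2) F), hgΓ⟩, rfl⟩) with hψ
  refine Finite.of_surjective ψ ?_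
  rintro ⟨x⟩
  exact ⟨Quotient.mk _ x, rfl⟩
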